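/- For every finite hypergraph H and all integers a, b ≥ 2, herdisc(H, b) ≤ a²·(b − 1) · herdisc(H, a). -/

import Mathlib

open Finset

/-- `c`-color discrepancy of the subhypergraph of `(V, E)` induced on `V₀`:
minimum over colorings of the maximum over colors `d` and edges `e` of
`||χ⁻¹(d) ∩ e ∩ V₀| - |e ∩ V₀|/c|`. -/
noncomputable def hdiscSub {V : Type*} [Fintype V] [DecidableEq V]
    (E : Finset (Finset V)) (c : ℕ) (V₀ : Finset V) : ℝ :=
  ⨅ χ : V → Fin c, ⨆ d : Fin c, ⨆ e : E,
    |(((e.1 ∩ V₀).filter (fun v => χ v = d)).card : ℝ) - ((e.1 ∩ V₀).card : ℝ) / c|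

/-- `c`-color discrepancy of the hypergraph `(V, E)`. -/
noncomputable def hdisc {V : Type*} [Fintype V] [DecidableEq V]
    (E : Finset (Finset V)) (c : ℕ) : ℝ := hdiscSub E c Finset.univ

/-- hereditary `c`-color discrepancy: maximum over all induced subhypergraphs. -/
noncomputable def hherdisc {V : Type*} [Fintype V] [DecidableEq V]
    (E : Finset (Finset V)) (c : ℕ) : ℝ := ⨆ V₀ : Finset V, hdiscSub E c V₀

section DiscrepancyAux

set_option linter.unusedSectionVars false
variable {V : Type*} [Fintype V] [DecidableEq V]

lemma hterm_nonneg (E : Finset (Finset V)) (c : ℕ) (V₀ : Finset V) (χ : V → Fin c) :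
    0 ≤ ⨆ d : Fin c, ⨆ e : E,
      |(((e.1 ∩ V₀).filter (fun v => χ v = d)).card : ℝ) - ((e.1 ∩ V₀).card : ℝ) / c| := by
  rcases isEmpty_or_nonempty (Fin c) with h | h
  · simp [iSup_of_empty']
  · exact Real.iSup_nonneg fun d => Real.iSup_nonneg fun e => abs_nonneg _

lemma hdiscSub_nonneg (E : Finset (Finset V)) (c : ℕ) (hc : 0 < c) (V₀ : Finset V) :
    0 ≤ hdiscSub E c V₀ := by
  haveI : Nonempty (Fin c) := ⟨⟨0, hc⟩⟩
  exact le_ciInf fun χ => hterm_nonneg E c V₀ χ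

lemma hherdisc_nonneg (E : Finset (Finset V)) (c : ℕ) (hc : 0 < c) :
    0 ≤ hherdisc E c :=
  le_trans (hdiscSub_nonneg E c hc ∅) (le_ciSup ((Set.finite_range _).bddAbove) ∅)

lemma exists_good (E : Finset (Finset V)) (a : ℕ) (ha : 0 < a) (S : Finset V) :
    ∃ χ : V → Fin a, ∀ (d : Fin a), ∀ e ∈ E,
      |(((e ∩ S).filter (fun v => χ v = d)).card : ℝ) - ((e ∩ S).card : ℝ) / a|
        ≤ hherdisc E a := by
  haveI : Nonempty (Fin a) := ⟨⟨0, ha⟩⟩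
  have h1 : hdiscSub E a S ≤ hherdisc E a := le_ciSup ((Set.finite_range _).bddAbove) S
  obtain ⟨χ₀, hχ₀⟩ := Finite.exists_min (fun χ : V → Fin a => ⨆ d : Fin a, ⨆ e : E,
    |(((e.1 ∩ S).filter (fun v => χ v = d)).card : ℝ) - ((e.1 ∩ S).card : ℝ) / a|)
  have h2 : (⨆ d : Fin a, ⨆ e : E,
      |(((e.1 ∩ S).filter (fun v => χ₀ v = d)).card : ℝ) - ((e.1 ∩ S).card : ℝ) / a|)
      ≤ hdiscSub E a S := le_ciInf hχ₀
  refine ⟨χ₀, fun d e he => ?_⟩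
  refine le_trans ?_ (h2.trans h1)
  calc |(((e ∩ S).filter (fun v => χ₀ v = d)).card : ℝ) - ((e ∩ S).card : ℝ) / a|
      ≤ ⨆ e' : E, |(((e'.1 ∩ S).filter (fun v => χ₀ v = d)).card : ℝ)
          - ((e'.1 ∩ S).card : ℝ) / a| :=
        le_ciSup (f := fun e' : E => |(((e'.1 ∩ S).filter (fun v => χ₀ v = d)).card : ℝ)
          - ((e'.1 ∩ S).card : ℝ) / a|) ((Set.finite_range _).bddAbove) (⟨e, he⟩ : E)
    _ ≤ _ := le_ciSup (f := fun d : Fin a => ⨆ e' : E,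
        |(((e'.1 ∩ S).filter (fun v => χ₀ v = d)).card : ℝ) - ((e'.1 ∩ S).card : ℝ) / a|)
        ((Set.finite_range _).bddAbove) d
lemma round_lemma (E : Finset (Finset V)) (a : ℕ) (ha : 2 ≤ a) (D : ℝ) (hD : 0 ≤ D)
    (hgood : ∀ S : Finset V, ∃ χ : V → Fin a, ∀ (d : Fin a), ∀ e ∈ E,
      |(((e ∩ S).filter (fun v => χ v = d)).card : ℝ) - ((e ∩ S).card : ℝ) / a| ≤ D) :
    ∀ (L : ℕ) (x : V → ℕ), (∀ v, x v ≤ a ^ L) →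
    ∃ y : V → ℕ, (∀ v, y v = 0 ∨ y v = a ^ L) ∧ (∀ v, x v = 0 → y v = 0) ∧
      ∀ e ∈ E, |∑ v ∈ e, ((y v : ℝ) - (x v : ℝ))|
        ≤ D * (a * (a - 1)) * ((a : ℝ) ^ L - 1) := by
  have ha0 : 0 < a := by omega
  have haR : (0:ℝ) < a := by exact_mod_cast ha0
  have haR1 : (1:ℝ) ≤ (a:ℝ) - 1 := by
    have : (2:ℝ) ≤ a := by exact_mod_cast ha
    linarith
  intro L
  induction L with
  | zero =>
    intro x hx
    refine ⟨x, fun v => ?_, fun v h => h, fun e he => ?_⟩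
    · have h0 := hx v; rw [pow_zero] at h0 ⊢; omega
    · simp
  | succ L ih =>
    intro x hx
    have hch : ∀ c : ℕ, ∃ χ : V → Fin a, ∀ (d : Fin a), ∀ e ∈ E,
        |(((e ∩ univ.filter (fun v => x v % a = c)).filter (fun v => χ v = d)).card : ℝ)
          - ((e ∩ univ.filter (fun v => x v % a = c)).card : ℝ) / a| ≤ D :=
      fun c => hgood _
    choose g hg using hch
    set x'' : V → ℕ :=
      fun v => x v / a + if ((g (x v % a) v : ℕ) < x v % a) then 1 else 0 with hx''def
    have hx'' : ∀ v, x'' v ≤ a ^ L := by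
      intro v
      by_cases h : x v % a = 0
      · have h2 : x'' v = x v / a := by simp [hx''def, h]
        rw [h2]
        have h3 : x v / a ≤ a ^ (L+1) / a := Nat.div_le_div_right (hx v)
        rwa [pow_succ, Nat.mul_div_cancel _ ha0] at h3
      · have hlt : x v < a ^ (L+1) := by
          rcases Nat.lt_or_ge (x v) (a ^ (L+1)) with h'|h'
          · exact h'
          · exfalso
            have : x v = a ^ (L+1) := le_antisymm (hx v) h'
            rw [this, pow_succ, Nat.mul_mod_left] at h
            exact h rfl
        have h4 : x v / a < a ^ L := by
          rw [Nat.div_lt_iff_lt_mul ha0, ← pow_succ]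
          exact hlt
        have : x'' v ≤ x v / a + 1 := by
          simp only [hx''def]
          split <;> omega
        omega
    obtain ⟨y'', hy1, hy2, hy3⟩ := ih x'' hx''
    have hx''0 : ∀ v, x v = 0 → x'' v = 0 := by
      intro v h
      simp [hx''def, h]
    refine ⟨fun v => a * y'' v, fun v => ?_, fun v h => ?_, fun e he => ?_⟩
    · rcases hy1 v with h | h
      · left; show a * y'' v = 0; simp [h]
      · right; show a * y'' v = a ^ (L+1); rw [h, pow_succ, mul_comm]
    · show a * y'' v = 0; simp [hy2 v (hx''0 v h)]
    · -- error bound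
      have key : |∑ v ∈ e, ((a * x'' v : ℝ) - x v)| ≤ (a:ℝ) * D * ((a:ℝ) * ((a:ℝ)-1) / 2) := by
        have hrw : ∀ v ∈ e, (a * x'' v : ℝ) - x v
            = (if ((g (x v % a) v : ℕ) < x v % a) then (a:ℝ) else 0) - ((x v % a : ℕ) : ℝ) := by
          intro v _
          have h1 : ((a * (x v / a) + x v % a : ℕ) : ℝ) = (x v : ℝ) := by
            rw [Nat.div_add_mod]
          push_cast at h1
          by_cases hc : ((g (x v % a) v : ℕ) < x v % a) <;>
            simp only [hx''def, hc, if_true, if_false] <;> push_cast <;> linarith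
        rw [Finset.sum_congr rfl hrw]
        have hfib : ∑ v ∈ e, ((if ((g (x v % a) v : ℕ) < x v % a) then (a:ℝ) else 0)
              - ((x v % a : ℕ) : ℝ))
            = ∑ c ∈ Finset.range a, ∑ v ∈ e.filter (fun v => x v % a = c),
                ((if ((g c v : ℕ) < c) then (a:ℝ) else 0) - ((c : ℕ) : ℝ)) := by
          rw [← Finset.sum_fiberwise_of_maps_to (g := fun v => x v % a) (t := Finset.range a)
            (fun v _ => Finset.mem_range.2 (Nat.mod_lt _ ha0))]
          refine Finset.sum_congr rfl fun c hc => Finset.sum_congr rfl fun v hv => ?_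
          have h2 : x v % a = c := (Finset.mem_filter.1 hv).2
          rw [h2]
        rw [hfib]
        have hcb : ∀ c ∈ Finset.range a,
            |∑ v ∈ e.filter (fun v => x v % a = c),
              ((if ((g c v : ℕ) < c) then (a:ℝ) else 0) - ((c : ℕ) : ℝ))|
            ≤ (a:ℝ) * ((c:ℕ):ℝ) * D := by
          intro c hc
          have hca : c < a := Finset.mem_range.1 hc
          set S := univ.filter (fun v => x v % a = c) with hS
          have hes : e.filter (fun v => x v % a = c) = e ∩ S := by
            ext v; simp [hS]
          set s := e ∩ S with hs
          set t := univ.filter (fun d : Fin a => (d : ℕ) < c) with ht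
          have htcard : t.card = c := by
            have h5 : t = Finset.Iio (⟨c, hca⟩ : Fin a) := by
              ext d; simp [ht, Fin.lt_def]
            rw [h5, Fin.card_Iio]
          have hdecomp : (s.filter (fun v => (g c v : ℕ) < c)).card
              = ∑ d ∈ t, ((s.filter (fun v => g c v = d)).card) := by
            rw [Finset.card_eq_sum_card_fiberwise (f := g c) (t := t)
              (fun v hv => by
                simp only [ht, Finset.mem_coe, Finset.mem_filter, Finset.mem_univ, true_and]
                exact (Finset.mem_filter.1 hv).2)]
            refine Finset.sum_congr rfl fun d hd => ?_
            congr 1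
            ext v
            simp only [Finset.mem_filter, ht, Finset.mem_univ, true_and] at hd ⊢
            constructor
            · rintro ⟨⟨hv1, _⟩, hv2⟩; exact ⟨hv1, hv2⟩
            · rintro ⟨hv1, hv2⟩; exact ⟨⟨hv1, by rw [hv2]; exact hd⟩, hv2⟩
          have hsum : ∑ v ∈ e.filter (fun v => x v % a = c),
                ((if ((g c v : ℕ) < c) then (a:ℝ) else 0) - ((c : ℕ) : ℝ))
              = ((s.filter (fun v => (g c v : ℕ) < c)).card : ℝ) * a - (s.card : ℝ) * c := by
            rw [hes, Finset.sum_sub_distrib, Finset.sum_ite, Finset.sum_const,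
              Finset.sum_const_zero, add_zero, Finset.sum_const, nsmul_eq_mul, nsmul_eq_mul]
          rw [hsum]
          have hU : |((s.filter (fun v => (g c v : ℕ) < c)).card : ℝ) - c * (s.card : ℝ) / a|
              ≤ c * D := by
            rw [hdecomp]
            push_cast
            have h6 : ((c:ℝ) * (s.card : ℝ) / a) = ∑ _d ∈ t, ((s.card : ℝ) / a) := by
              rw [Finset.sum_const, htcard, nsmul_eq_mul]
              ring
            rw [h6, ← Finset.sum_sub_distrib]
            calc |∑ d ∈ t, (((s.filter (fun v => g c v = d)).card : ℝ) - (s.card : ℝ) / a)|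
                ≤ ∑ d ∈ t, |(((s.filter (fun v => g c v = d)).card : ℝ) - (s.card : ℝ) / a)| :=
                  Finset.abs_sum_le_sum_abs _ _
              _ ≤ ∑ _d ∈ t, D := Finset.sum_le_sum fun d _ => hg c d e he
              _ = c * D := by rw [Finset.sum_const, htcard, nsmul_eq_mul]
          have hid : ((s.filter (fun v => (g c v : ℕ) < c)).card : ℝ) * a - (s.card : ℝ) * c
              = a * (((s.filter (fun v => (g c v : ℕ) < c)).card : ℝ) - c * (s.card : ℝ) / a) := by
            field_simp
          rw [hid, abs_mul, abs_of_pos haR]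
          calc (a:ℝ) * |((s.filter (fun v => (g c v : ℕ) < c)).card : ℝ) - c * (s.card:ℝ) / a|
              ≤ (a:ℝ) * (c * D) := by
                exact mul_le_mul_of_nonneg_left hU (le_of_lt haR)
            _ = (a:ℝ) * ((c:ℕ):ℝ) * D := by ring
        calc |∑ c ∈ Finset.range a, ∑ v ∈ e.filter (fun v => x v % a = c),
              ((if ((g c v : ℕ) < c) then (a:ℝ) else 0) - ((c : ℕ) : ℝ))|
            ≤ ∑ c ∈ Finset.range a, |∑ v ∈ e.filter (fun v => x v % a = c),
              ((if ((g c v : ℕ) < c) then (a:ℝ) else 0) - ((c : ℕ) : ℝ))| :=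
              Finset.abs_sum_le_sum_abs _ _
          _ ≤ ∑ c ∈ Finset.range a, (a:ℝ) * ((c:ℕ):ℝ) * D := Finset.sum_le_sum hcb
          _ = (a:ℝ) * D * ∑ c ∈ Finset.range a, ((c:ℕ):ℝ) := by
              rw [Finset.mul_sum]; exact Finset.sum_congr rfl fun c _ => by ring
          _ = (a:ℝ) * D * ((a:ℝ) * ((a:ℝ)-1) / 2) := by
              congr 1
              have h9 : (((∑ i ∈ Finset.range a, i) * 2 : ℕ) : ℝ) = ((a * (a-1) : ℕ) : ℝ) := by
                rw [Finset.sum_range_id_mul_two a]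
              push_cast [Nat.cast_sub (by omega : 1 ≤ a)] at h9
              linarith
      have hsplit : ∑ v ∈ e, (((fun v => a * y'' v) v : ℝ) - x v)
          = (a:ℝ) * (∑ v ∈ e, ((y'' v : ℝ) - x'' v)) + ∑ v ∈ e, ((a * x'' v : ℝ) - x v) := by
        rw [Finset.mul_sum, ← Finset.sum_add_distrib]
        refine Finset.sum_congr rfl fun v _ => ?_
        push_cast
        ring
      rw [hsplit]
      calc |(a:ℝ) * (∑ v ∈ e, ((y'' v : ℝ) - x'' v)) + ∑ v ∈ e, ((a * x'' v : ℝ) - x v)|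
          ≤ |(a:ℝ) * (∑ v ∈ e, ((y'' v : ℝ) - x'' v))| + |∑ v ∈ e, ((a * x'' v : ℝ) - x v)| :=
            abs_add_le _ _
        _ ≤ (a:ℝ) * (D * (a * ((a:ℝ)-1)) * ((a:ℝ)^L - 1)) + (a:ℝ) * D * ((a:ℝ) * ((a:ℝ)-1) / 2) := by
            rw [abs_mul, abs_of_pos haR]
            exact add_le_add (mul_le_mul_of_nonneg_left (hy3 e he) (le_of_lt haR)) key
        _ ≤ D * ((a:ℝ) * ((a:ℝ) - 1)) * ((a:ℝ) ^ (L+1) - 1) := by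
            have hpow : (a:ℝ) ^ (L+1) = (a:ℝ) * (a:ℝ)^L := by ring
            nlinarith [mul_nonneg (mul_nonneg hD (le_of_lt haR)) (sub_nonneg.2 (le_trans haR1 (le_refl _))), pow_pos haR L, mul_nonneg hD (le_of_lt haR)]
lemma peel_lemma (E : Finset (Finset V)) (a : ℕ) (ha : 2 ≤ a) (D : ℝ) (hD : 0 ≤ D)
    (hgood : ∀ S : Finset V, ∃ χ : V → Fin a, ∀ (d : Fin a), ∀ e ∈ E,
      |(((e ∩ S).filter (fun v => χ v = d)).card : ℝ) - ((e ∩ S).card : ℝ) / a| ≤ D)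
    (W : Finset V) (m : ℕ) (hm : 1 ≤ m) (δ : ℝ) (hδ : 0 < δ) :
    ∃ C : Finset V, C ⊆ W ∧ ∀ e ∈ E,
      |((e ∩ C).card : ℝ) - ((e ∩ W).card : ℝ) / m| ≤ D * a * (a - 1) + δ := by
  have ha0 : 0 < a := by omega
  have haR : (0:ℝ) < a := by exact_mod_cast ha0
  have hmR : (0:ℝ) < m := by exact_mod_cast hm
  obtain ⟨L, hL⟩ := pow_unbounded_of_one_lt ((Fintype.card V : ℝ) / δ)
    (by exact_mod_cast ha : (1:ℝ) < (a:ℕ))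
  have hpL : (0:ℝ) < (a:ℝ) ^ L := pow_pos haR L
  have hN : (Fintype.card V : ℝ) / (a:ℝ)^L < δ := by
    rw [div_lt_iff₀ hpL]
    calc (Fintype.card V : ℝ) = ((Fintype.card V : ℝ)/δ) * δ := by field_simp
      _ < (a:ℝ)^L * δ := by exact mul_lt_mul_of_pos_right hL hδ
      _ = δ * (a:ℝ)^L := by ring
  set t : ℕ := a ^ L / m with htdef
  set x : V → ℕ := fun v => if v ∈ W then t else 0 with hxdef
  have hxle : ∀ v, x v ≤ a ^ L := by
    intro v
    simp only [hxdef]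
    split
    · exact Nat.div_le_self _ _
    · exact Nat.zero_le _
  obtain ⟨y, hy1, hy2, hy3⟩ := round_lemma E a ha D hD hgood L x hxle
  set C : Finset V := univ.filter (fun v => y v ≠ 0) with hCdef
  have hCW : C ⊆ W := by
    intro v hv
    simp only [hCdef, Finset.mem_filter] at hv
    by_contra hvW
    exact hv.2 (hy2 v (by simp [hxdef, hvW]))
  refine ⟨C, hCW, fun e he => ?_⟩
  -- sums
  have hsy : ∑ v ∈ e, (y v : ℝ) = ((e ∩ C).card : ℝ) * (a:ℝ)^L := by
    have h1 : e ∩ C = e.filter (fun v => y v ≠ 0) := by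
      ext v; simp [hCdef]
    have h2 : ∑ v ∈ e, (y v : ℝ) = ∑ v ∈ e.filter (fun v => y v ≠ 0), (y v : ℝ) := by
      rw [Finset.sum_filter]
      refine Finset.sum_congr rfl fun v _ => ?_
      by_cases h : y v = 0 <;> simp [h]
    have h3 : ∀ v ∈ e.filter (fun v => y v ≠ 0), (y v : ℝ) = (a:ℝ)^L := by
      intro v hv
      rcases hy1 v with h | h
      · exact absurd h (Finset.mem_filter.1 hv).2
      · rw [h]; push_cast; ring
    rw [h2, Finset.sum_congr rfl h3, Finset.sum_const, nsmul_eq_mul, h1]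
  have hsx : ∑ v ∈ e, (x v : ℝ) = (t : ℝ) * ((e ∩ W).card : ℝ) := by
    have h1 : e ∩ W = e.filter (fun v => v ∈ W) := by
      ext v; simp
    rw [h1]
    rw [Finset.sum_congr rfl (fun v _ => by simp only [hxdef]; push_cast; rfl)]
    rw [Finset.sum_ite, Finset.sum_const, Finset.sum_const_zero, add_zero, nsmul_eq_mul]
    ring
  have hkey := hy3 e he
  rw [Finset.sum_sub_distrib, hsy, hsx] at hkey
  -- t relation: a^L = t * m + r, r < m
  have hmod := Nat.div_add_mod (a ^ L) m
  have hrlt : a ^ L % m < m := Nat.mod_lt _ (by omega)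
  have htm : (a:ℝ)^L = (t:ℝ) * m + ((a^L % m : ℕ) : ℝ) := by
    have : ((m * (a^L / m) + a^L % m : ℕ) : ℝ) = ((a^L : ℕ) : ℝ) := by
      rw [Nat.div_add_mod]
    push_cast at this
    rw [htdef]
    push_cast
    linarith
  set cC := ((e ∩ C).card : ℝ) with hcCdef
  set cW := ((e ∩ W).card : ℝ) with hcWdef
  have hcWN : cW ≤ (Fintype.card V : ℝ) := by
    rw [hcWdef]
    exact_mod_cast Finset.card_le_univ (e ∩ W)
  have hcW0 : 0 ≤ cW := Nat.cast_nonneg _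
  -- |cC - (t/a^L) cW| ≤ D a (a-1)
  have h3 : |cC - (t:ℝ)/(a:ℝ)^L * cW| ≤ D * a * (a-1) := by
    have h4 : cC - (t:ℝ)/(a:ℝ)^L * cW = (cC * (a:ℝ)^L - (t:ℝ) * cW) / (a:ℝ)^L := by
      field_simp
    rw [h4, abs_div, abs_of_pos hpL, div_le_iff₀ hpL]
    calc |cC * (a:ℝ)^L - (t:ℝ) * cW| ≤ D * ((a:ℝ) * ((a:ℝ)-1)) * ((a:ℝ)^L - 1) := hkey
      _ ≤ D * a * ((a:ℝ)-1) * (a:ℝ)^L := by nlinarith [mul_nonneg (mul_nonneg hD haR.le) (by linarith [show (2:ℝ) ≤ a by exact_mod_cast ha] : (0:ℝ) ≤ (a:ℝ)-1)]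
  -- |(t/a^L) cW - cW/m| ≤ δ
  have h5 : |(t:ℝ)/(a:ℝ)^L * cW - cW / m| ≤ (Fintype.card V : ℝ)/(a:ℝ)^L := by
    have h6 : (t:ℝ)/(a:ℝ)^L - 1/m = -(((a^L % m : ℕ) : ℝ) / (m * (a:ℝ)^L)) := by
      have hne1 : ((a:ℝ)^L) ≠ 0 := ne_of_gt hpL
      have hne2 : (m:ℝ) ≠ 0 := ne_of_gt hmR
      rw [div_sub_div _ _ hne1 hne2, mul_one]
      rw [show (t:ℝ)*m - (a:ℝ)^L = -((a^L % m : ℕ):ℝ) by linarith [htm]]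
      rw [neg_div]
      ring
    have h7 : (t:ℝ)/(a:ℝ)^L * cW - cW / m = ((t:ℝ)/(a:ℝ)^L - 1/m) * cW := by ring
    rw [h7, h6, abs_mul, abs_neg, abs_of_nonneg hcW0,
      abs_of_nonneg (by positivity : (0:ℝ) ≤ ((a^L % m : ℕ) : ℝ) / (m * (a:ℝ)^L))]
    have h8 : ((a^L % m : ℕ) : ℝ) / (m * (a:ℝ)^L) ≤ 1 / (a:ℝ)^L := by
      rw [div_le_div_iff₀ (by positivity) hpL]
      have : ((a^L % m : ℕ) : ℝ) ≤ m := by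
        have := hrlt.le
        exact_mod_cast this
      nlinarith
    calc ((a^L % m : ℕ) : ℝ) / (m * (a:ℝ)^L) * cW ≤ 1/(a:ℝ)^L * cW := by
          exact mul_le_mul_of_nonneg_right h8 hcW0
      _ ≤ 1/(a:ℝ)^L * (Fintype.card V : ℝ) := by
          exact mul_le_mul_of_nonneg_left hcWN (by positivity)
      _ = (Fintype.card V : ℝ)/(a:ℝ)^L := by ring
  calc |cC - cW / m| = |(cC - (t:ℝ)/(a:ℝ)^L * cW) + ((t:ℝ)/(a:ℝ)^L * cW - cW/m)| := by ring_nf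
    _ ≤ |cC - (t:ℝ)/(a:ℝ)^L * cW| + |(t:ℝ)/(a:ℝ)^L * cW - cW/m| := abs_add_le _ _
    _ ≤ D * a * (a-1) + (Fintype.card V : ℝ)/(a:ℝ)^L := add_le_add h3 h5
    _ ≤ D * a * (a-1) + δ := by linarith
lemma part_lemma (E : Finset (Finset V)) (a : ℕ) (ha : 2 ≤ a) (D : ℝ) (hD : 0 ≤ D)
    (hgood : ∀ S : Finset V, ∃ χ : V → Fin a, ∀ (d : Fin a), ∀ e ∈ E,
      |(((e ∩ S).filter (fun v => χ v = d)).card : ℝ) - ((e ∩ S).card : ℝ) / a| ≤ D) :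
    ∀ (m : ℕ) (W : Finset V) (δ : ℝ), 0 < δ →
    ∃ f : V → Fin (m+1), ∀ e ∈ E, ∀ d : Fin (m+1),
      |(((e ∩ W).filter (fun v => f v = d)).card : ℝ) - ((e ∩ W).card : ℝ) / (m+1)|
        ≤ m * (D * a * (a-1) + δ) := by
  intro m
  induction m with
  | zero =>
    intro W δ hδ
    refine ⟨fun _ => 0, fun e he d => ?_⟩
    have hd : d = 0 := Fin.ext (by simpa using Nat.lt_one_iff.mp d.isLt)
    subst hd
    have h1 : (e ∩ W).filter (fun _ => (0 : Fin (0+1)) = 0) = e ∩ W := by simp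
    rw [h1]
    simp
  | succ m ih =>
    intro W δ hδ
    obtain ⟨C, hCW, hC⟩ := peel_lemma E a ha D hD hgood W (m+2) (by omega) δ hδ
    obtain ⟨g, hgp⟩ := ih (W \ C) δ hδ
    set K := D * a * (a-1) + δ with hK
    have haR2 : (2:ℝ) ≤ (a:ℝ) := by exact_mod_cast ha
    have hK0 : 0 ≤ K := by
      have h2 : (0:ℝ) ≤ D * a * (a-1) :=
        mul_nonneg (mul_nonneg hD (by linarith)) (by linarith)
      rw [hK]; linarith
    refine ⟨fun v => if v ∈ C then 0 else (g v).succ, fun e he d => ?_⟩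
    have hsub : e ∩ C ⊆ e ∩ W := Finset.inter_subset_inter le_rfl hCW
    have hcard : ((e ∩ (W \ C)).card : ℝ) = ((e ∩ W).card : ℝ) - ((e ∩ C).card : ℝ) := by
      have h1 : e ∩ (W \ C) = (e ∩ W) \ (e ∩ C) := by
        ext v; simp; tauto
      rw [h1, Finset.card_sdiff_of_subset hsub]
      have := Finset.card_le_card hsub
      push_cast [Nat.cast_sub this]
      ring
    set cW := ((e ∩ W).card : ℝ) with hcWdef
    set cC := ((e ∩ C).card : ℝ) with hcCdef
    have hCb : |cC - cW/((m:ℝ)+1+1)| ≤ K := by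
      have h0 := hC e he
      push_cast at h0
      rw [← hcCdef, ← hcWdef] at h0
      rw [show ((m:ℝ)+1+1) = ((m:ℝ)+2) by ring]
      exact h0
    have hm1 : (0:ℝ) < (m:ℝ)+1 := by positivity
    induction d using Fin.cases with
    | zero =>
      have h1 : (e ∩ W).filter (fun v => (if v ∈ C then 0 else (g v).succ) = (0 : Fin (m+2)))
          = e ∩ C := by
        ext v
        simp only [Finset.mem_filter, Finset.mem_inter]
        constructor
        · rintro ⟨⟨hv1, hv2⟩, hv3⟩
          by_cases hvC : v ∈ C
          · exact ⟨hv1, hvC⟩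
          · rw [if_neg hvC] at hv3
            exact absurd hv3 (Fin.succ_ne_zero _)
        · rintro ⟨hv1, hv2⟩
          exact ⟨⟨hv1, hCW hv2⟩, by rw [if_pos hv2]⟩
      rw [h1]
      push_cast
      refine le_trans hCb ?_
      nlinarith [hK0]
    | succ i =>
      have h1 : (e ∩ W).filter (fun v => (if v ∈ C then 0 else (g v).succ) = Fin.succ i)
          = (e ∩ (W \ C)).filter (fun v => g v = i) := by
        ext v
        simp only [Finset.mem_filter, Finset.mem_inter, Finset.mem_sdiff]
        constructor
        · rintro ⟨⟨hv1, hv2⟩, hv3⟩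
          by_cases hvC : v ∈ C
          · rw [if_pos hvC] at hv3
            exact absurd hv3.symm (Fin.succ_ne_zero _)
          · rw [if_neg hvC] at hv3
            exact ⟨⟨hv1, hv2, hvC⟩, Fin.succ_injective _ hv3⟩
        · rintro ⟨⟨hv1, hv2, hv3⟩, hv4⟩
          exact ⟨⟨hv1, hv2⟩, by rw [if_neg hv3, hv4]⟩
      rw [h1]
      push_cast
      have h2 := hgp e he i
      rw [hcard] at h2
      set n := (((e ∩ (W \ C)).filter (fun v => g v = i)).card : ℝ) with hndef
      have h3 : |(cW - cC)/((m:ℝ)+1) - cW/((m:ℝ)+1+1)| ≤ K / ((m:ℝ)+1) := by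
        have hid : (cW - cC)/((m:ℝ)+1) - cW/((m:ℝ)+1+1)
            = (cW/((m:ℝ)+1+1) - cC) / ((m:ℝ)+1) := by
          field_simp
          ring
        rw [hid, abs_div, abs_of_pos hm1]
        gcongr
        rw [abs_sub_comm]
        exact hCb
      have h4 : K / ((m:ℝ)+1) ≤ K := by
        rw [div_le_iff₀ hm1]
        nlinarith [hK0]
      calc |n - cW/((m:ℝ)+1+1)|
          = |(n - (cW - cC)/((m:ℝ)+1)) + ((cW - cC)/((m:ℝ)+1) - cW/((m:ℝ)+1+1))| := by ring_nf
        _ ≤ |n - (cW - cC)/((m:ℝ)+1)| + |(cW - cC)/((m:ℝ)+1) - cW/((m:ℝ)+1+1)| := abs_add_le _ _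
        _ ≤ (m:ℝ) * K + K / ((m:ℝ)+1) := add_le_add h2 h3
        _ ≤ ((m:ℝ)+1) * K := by linarith
end DiscrepancyAux

/-- For every finite hypergraph H and all integers a, b ≥ 2,
herdisc(H, b) ≤ a²·(b − 1) · herdisc(H, a). -/
theorem hyp_herdisc_le_sq_mul_herdisc {V : Type*} [Fintype V] [DecidableEq V]
    (E : Finset (Finset V)) (a b : ℕ) (ha : 2 ≤ a) (hb : 2 ≤ b) :
    hherdisc E b ≤ (a : ℝ) ^ 2 * ((b : ℝ) - 1) * hherdisc E a := by
  obtain ⟨m, rfl⟩ : ∃ m, b = m + 1 := ⟨b - 1, by omega⟩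
  have ha0 : 0 < a := by omega
  have haR2 : (2:ℝ) ≤ (a:ℝ) := by exact_mod_cast ha
  set D := hherdisc E a with hDdef
  have hD : 0 ≤ D := hherdisc_nonneg E a ha0
  have hgood : ∀ S : Finset V, ∃ χ : V → Fin a, ∀ (d : Fin a), ∀ e ∈ E,
      |(((e ∩ S).filter (fun v => χ v = d)).card : ℝ) - ((e ∩ S).card : ℝ) / a| ≤ D :=
    fun S => exists_good E a ha0 S
  have hmR : (0:ℝ) ≤ (m:ℝ) := Nat.cast_nonneg m
  have hmain : ∀ V₀ : Finset V, hdiscSub E (m+1) V₀ ≤ (m:ℝ) * (D * a * (a-1)) := by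
    intro V₀
    refine le_of_forall_pos_le_add ?_
    intro ε hε
    have hδ : 0 < ε / ((m:ℝ)+1) := by positivity
    obtain ⟨f, hf⟩ := part_lemma E a ha D hD hgood m V₀ (ε/((m:ℝ)+1)) hδ
    have hbd0 : (0:ℝ) ≤ (m:ℝ) * (D * a * (a-1)) + ε := by
      have : (0:ℝ) ≤ D * a * (a-1) :=
        mul_nonneg (mul_nonneg hD (by linarith)) (by linarith)
      nlinarith
    have h1 : hdiscSub E (m+1) V₀ ≤ ⨆ d : Fin (m+1), ⨆ e : E,
        |(((e.1 ∩ V₀).filter (fun v => f v = d)).card : ℝ)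
          - ((e.1 ∩ V₀).card : ℝ) / ((m+1 : ℕ) : ℝ)| := by
      refine ciInf_le ⟨0, ?_⟩ f
      rintro r ⟨χ, rfl⟩
      exact hterm_nonneg E (m+1) V₀ χ
    refine h1.trans ?_
    refine Real.iSup_le (fun d => Real.iSup_le (fun e => ?_) hbd0) hbd0
    have h2 := hf e.1 e.2 d
    rw [mul_add] at h2
    have h5 : (m:ℝ) * (ε/((m:ℝ)+1)) ≤ ε := by
      rw [mul_comm, div_mul_eq_mul_div, div_le_iff₀ (by positivity : (0:ℝ) < (m:ℝ)+1)]
      nlinarith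
    have h6 : |(((e.1 ∩ V₀).filter (fun v => f v = d)).card : ℝ)
        - ((e.1 ∩ V₀).card : ℝ) / ((m+1 : ℕ) : ℝ)|
        = |(((e.1 ∩ V₀).filter (fun v => f v = d)).card : ℝ)
        - ((e.1 ∩ V₀).card : ℝ) / ((m:ℝ)+1)| := by
      norm_cast
    rw [h6]
    linarith
  have hfin : hherdisc E (m+1) ≤ (m:ℝ) * (D * a * (a-1)) := ciSup_le hmain
  refine hfin.trans ?_
  have hcast : ((m+1 : ℕ) : ℝ) - 1 = (m:ℝ) := by push_cast; ring
  rw [hcast]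
  nlinarith [mul_nonneg hmR hD, mul_nonneg (mul_nonneg hmR hD) (by linarith : (0:ℝ) ≤ (a:ℝ))]
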